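/- Let r be a positive real number. Then both 1 + r and 1 + r⁻¹ belong to the subring ℤ[1/(1+r)] of ℝ if and only if r is an algebraic unit, i.e., both r and r⁻¹ are algebraic integers. -/

import Mathlib

open Polynomial

lemma reflect_natDegree_le (N : ℕ) (p : ℤ[X]) (h : p.natDegree ≤ N) :
    (reflect N p).natDegree ≤ N := by
  refine natDegree_le_iff_coeff_eq_zero.mpr fun m hm => ?_
  rw [coeff_reflect, revAt_eq_self_of_lt hm]
  exact coeff_eq_zero_of_natDegree_lt (lt_of_le_of_lt h hm)

lemma isIntegral_of_mem_adjoin_inv {x : ℝ} (hx : x ≠ 0)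
    (h : x ∈ Algebra.adjoin ℤ ({x⁻¹} : Set ℝ)) : IsIntegral ℤ x := by
  rw [Algebra.adjoin_singleton_eq_range_aeval, AlgHom.mem_range] at h
  obtain ⟨p, hp⟩ := h
  set N := p.natDegree with hN
  refine ⟨X ^ (N + 1) - reflect N p, monic_X_pow_sub ?_, ?_⟩
  · exact lt_of_le_of_lt (natDegree_le_iff_degree_le.mp (reflect_natDegree_le N p le_rfl))
      (by exact_mod_cast Nat.lt_succ_self N)
  · letI : Invertible (x⁻¹) := invertibleOfNonzero (inv_ne_zero hx)
    have key := eval₂_reflect_mul_pow (algebraMap ℤ ℝ) (x⁻¹) N p le_rfl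
    rw [invOf_eq_inv, inv_inv] at key
    have hp' : eval₂ (algebraMap ℤ ℝ) x⁻¹ p = x := hp
    rw [hp'] at key
    have hxN : (x⁻¹ : ℝ) ^ N = (x ^ N)⁻¹ := by rw [inv_pow]
    have : eval₂ (algebraMap ℤ ℝ) x (reflect N p) = x * x ^ N := by
      have hxn : x ^ N ≠ 0 := pow_ne_zero _ hx
      field_simp [hxN] at key
      rw [one_div, hxN, ← div_eq_mul_inv, div_eq_iff hxn] at key
      exact key
    simp only [eval₂_at_apply, eval₂_sub, eval₂_X_pow, this]
    ring

lemma mem_adjoin_inv_of_isIntegral {x : ℝ} (hx : x ≠ 0) (h : IsIntegral ℤ x) :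
    x ∈ Algebra.adjoin ℤ ({x⁻¹} : Set ℝ) := by
  obtain ⟨p, hm, hev⟩ := h
  set N := p.natDegree with hN
  have hN1 : 1 ≤ N := by
    by_contra hc
    push_neg at hc
    interval_cases N
    · rw [Polynomial.eq_one_of_monic_natDegree_zero hm hN.symm] at hev
      simp at hev
  set q := p.eraseLead with hq
  have hq1 : q.natDegree ≤ N - 1 := eraseLead_natDegree_le p
  have hsum : q + X ^ N = p := by
    have := eraseLead_add_C_mul_X_pow p
    rwa [hm.leadingCoeff, map_one, one_mul] at this
  letI : Invertible x := invertibleOfNonzero hx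
  have key := eval₂_reflect_mul_pow (algebraMap ℤ ℝ) x (N - 1) q hq1
  rw [invOf_eq_inv] at key
  -- eval₂ x⁻¹ (reflect (N-1) q) * x^(N-1) = eval₂ x q
  have hev' : eval₂ (algebraMap ℤ ℝ) x q + x ^ N = 0 := by
    have := hev
    rw [← hsum] at this
    simpa [eval₂_at_apply] using this
  have hxN1 : x ^ N = x * x ^ (N - 1) := by
    rw [← pow_succ']
    congr 1
    omega
  have hx' : x ^ (N - 1) ≠ 0 := pow_ne_zero _ hx
  have hxeq : x = -(eval₂ (algebraMap ℤ ℝ) x⁻¹ (reflect (N - 1) q)) := by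
    have : eval₂ (algebraMap ℤ ℝ) x⁻¹ (reflect (N - 1) q) * x ^ (N - 1)
        + x * x ^ (N - 1) = 0 := by rw [key, ← hxN1]; exact hev'
    have h2 : (eval₂ (algebraMap ℤ ℝ) x⁻¹ (reflect (N - 1) q) + x) * x ^ (N - 1) = 0 := by
      ring_nf; ring_nf at this; linarith [this]
    rcases mul_eq_zero.mp h2 with h3 | h3
    · linarith [h3]
    · exact absurd h3 hx'
  have hmem : (aeval x⁻¹ (reflect (N - 1) q) : ℝ) ∈ Algebra.adjoin ℤ ({x⁻¹} : Set ℝ) := by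
    rw [Algebra.adjoin_singleton_eq_range_aeval]
    exact ⟨_, rfl⟩
  have hmem2 := neg_mem hmem
  have hxeq' : x = -(aeval x⁻¹ (reflect (N - 1) q) : ℝ) := hxeq
  rwa [← hxeq'] at hmem2

lemma adjoin_eq_of_pos {r : ℝ} (hr : 0 < r) :
    Algebra.adjoin ℤ ({(1 + r)⁻¹} : Set ℝ) = Algebra.adjoin ℤ ({(1 + r⁻¹)⁻¹} : Set ℝ) := by
  have hr0 : r ≠ 0 := ne_of_gt hr
  have hs : (1 + r) ≠ 0 := by positivity
  have ht : (1 + r⁻¹) ≠ 0 := by positivity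
  have e1 : (1 + r)⁻¹ = 1 - (1 + r⁻¹)⁻¹ := by field_simp; ring
  have e2 : (1 + r⁻¹)⁻¹ = 1 - (1 + r)⁻¹ := by field_simp; ring
  apply le_antisymm <;> rw [Algebra.adjoin_le_iff, Set.singleton_subset_iff]
  · rw [e1]
    exact sub_mem (one_mem _) (Algebra.subset_adjoin rfl)
  · rw [e2]
    exact sub_mem (one_mem _) (Algebra.subset_adjoin rfl)

theorem stmt_15 (r : ℝ) (hr : 0 < r) :
    ((1 + r ∈ Algebra.adjoin ℤ ({(1 + r)⁻¹} : Set ℝ)) ∧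
      (1 + r⁻¹ ∈ Algebra.adjoin ℤ ({(1 + r)⁻¹} : Set ℝ))) ↔
      (IsIntegral ℤ r ∧ IsIntegral ℤ r⁻¹) := by
  have hs : (1 + r) ≠ 0 := by positivity
  have ht : (1 + r⁻¹) ≠ 0 := by positivity
  constructor
  · rintro ⟨h1, h2⟩
    have i1 := isIntegral_of_mem_adjoin_inv hs h1
    rw [adjoin_eq_of_pos hr] at h2
    have i2 := isIntegral_of_mem_adjoin_inv ht h2
    constructor
    · simpa using i1.sub isIntegral_one
    · simpa using i2.sub isIntegral_one
  · rintro ⟨h1, h2⟩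
    constructor
    · exact mem_adjoin_inv_of_isIntegral hs (isIntegral_one.add h1)
    · rw [adjoin_eq_of_pos hr]
      exact mem_adjoin_inv_of_isIntegral ht (isIntegral_one.add h2)
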